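/- Let f : ℝⁿ → ℝᵐ be twice continuously differentiable, let y ∈ ℝᵐ, let θ* ∈ ℝⁿ, and let α ≥ 0. Then the second Fréchet derivative (Hessian bilinear form) of the α-expanded objective E_α at the point θ* satisfies, for all u, v ∈ ℝⁿ: D²E_α(θ*)(u, v) = (1 + α)·D²E(θ*)(u, v) − α·⟪Df(θ*)u, Df(θ*)v⟫, where Df(θ*) is the Fréchet derivative of f at θ* and D²E(θ*) is the second Fréchet derivative of E at θ*. -/

import Mathlib

open scoped RealInnerProductSpace

section Aux

variable {n m : ℕ}

local notation "En" => EuclideanSpace ℝ (Fin n)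
local notation "Fm" => EuclideanSpace ℝ (Fin m)

lemma aux_fst (f : En → Fm) (hf : ContDiff ℝ 2 f) (c : Fm) (θ v : En) :
    fderiv ℝ (fun θ => (1/2 : ℝ) * ‖c - f θ‖ ^ 2) θ v
      = -⟪c - f θ, fderiv ℝ f θ v⟫ := by
  have hdf : DifferentiableAt ℝ f θ :=
    (hf.differentiable (by norm_num)).differentiableAt
  have hg : DifferentiableAt ℝ (fun θ => c - f θ) θ :=
    (differentiableAt_const c).sub hdf
  have h1 : (fun θ => (1/2 : ℝ) * ‖c - f θ‖ ^ 2)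
      = fun θ => (1/2 : ℝ) * ⟪c - f θ, c - f θ⟫ := by
    funext θ; rw [real_inner_self_eq_norm_sq]
  rw [h1, fderiv_const_mul (hg.inner ℝ hg)]
  simp only [ContinuousLinearMap.coe_smul', Pi.smul_apply, smul_eq_mul]
  rw [fderiv_inner_apply (𝕜 := ℝ) hg hg]
  have h2 : fderiv ℝ (fun θ => c - f θ) θ v = -(fderiv ℝ f θ v) := by
    rw [fderiv_const_sub c]; simp
  rw [h2]
  rw [inner_neg_right, inner_neg_left, real_inner_comm]
  ring

lemma aux_snd (f : En → Fm) (hf : ContDiff ℝ 2 f) (c : Fm) (θs u v : En) :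
    fderiv ℝ (fderiv ℝ (fun θ => (1/2 : ℝ) * ‖c - f θ‖ ^ 2)) θs u v
      = ⟪fderiv ℝ f θs u, fderiv ℝ f θs v⟫
        - ⟪c - f θs, fderiv ℝ (fderiv ℝ f) θs u v⟫ := by
  have hdiff : Differentiable ℝ f := hf.differentiable (by norm_num)
  have hEc : ContDiff ℝ 2 (fun θ => (1/2 : ℝ) * ‖c - f θ‖ ^ 2) :=
    contDiff_const.mul ((contDiff_const.sub hf).norm_sq ℝ)
  -- differentiability of the derivative maps
  have hdEc : Differentiable ℝ (fderiv ℝ (fun θ => (1/2 : ℝ) * ‖c - f θ‖ ^ 2)) :=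
    (hEc.fderiv_right (m := 1) (by norm_num)).differentiable one_ne_zero
  have hdf2 : Differentiable ℝ (fderiv ℝ f) :=
    (hf.fderiv_right (m := 1) (by norm_num)).differentiable one_ne_zero
  -- swap application
  have hswap : ∀ (g : En → (En →L[ℝ] ℝ)) (hg : DifferentiableAt ℝ g θs),
      fderiv ℝ (fun θ => g θ v) θs u = fderiv ℝ g θs u v := by
    intro g hg
    rw [fderiv_clm_apply hg (differentiableAt_const v)]
    simp
  rw [← hswap _ (hdEc θs)]
  have h1 : (fun θ => fderiv ℝ (fun θ => (1/2 : ℝ) * ‖c - f θ‖ ^ 2) θ v)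
      = fun θ => -⟪c - f θ, fderiv ℝ f θ v⟫ := by
    funext θ; exact aux_fst f hf c θ v
  rw [h1]
  have hg1 : DifferentiableAt ℝ (fun θ => c - f θ) θs :=
    (differentiableAt_const c).sub (hdiff θs)
  have hg2 : DifferentiableAt ℝ (fun θ => fderiv ℝ f θ v) θs :=
    (hdf2 θs).clm_apply (differentiableAt_const v)
  rw [fderiv_fun_neg]
  simp only [ContinuousLinearMap.neg_apply]
  rw [fderiv_inner_apply (𝕜 := ℝ) hg1 hg2]
  have h2 : fderiv ℝ (fun θ => c - f θ) θs u = -(fderiv ℝ f θs u) := by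
    rw [fderiv_const_sub c]; simp
  have h3 : fderiv ℝ (fun θ => fderiv ℝ f θ v) θs u
      = fderiv ℝ (fderiv ℝ f) θs u v := by
    rw [fderiv_clm_apply (hdf2 θs) (differentiableAt_const v)]; simp
  rw [h2, h3, inner_neg_left]
  ring

end Aux

/-- The least-squares objective `E(θ) = ½‖y − f(θ)‖²`. -/
noncomputable def lsE {n m : ℕ} (f : EuclideanSpace ℝ (Fin n) → EuclideanSpace ℝ (Fin m))
    (y : EuclideanSpace ℝ (Fin m)) (θ : EuclideanSpace ℝ (Fin n)) : ℝ :=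
  (1 / 2) * ‖y - f θ‖ ^ 2

/-- The `α`-expanded objective at the point `θs`:
`E_α(θ) = ½‖ŷ − f(θ)‖²` with `ŷ = y + α • (y − f(θs))`. -/
noncomputable def lsEexp {n m : ℕ} (f : EuclideanSpace ℝ (Fin n) → EuclideanSpace ℝ (Fin m))
    (y : EuclideanSpace ℝ (Fin m)) (θs : EuclideanSpace ℝ (Fin n)) (α : ℝ)
    (θ : EuclideanSpace ℝ (Fin n)) : ℝ :=
  (1 / 2) * ‖(y + α • (y - f θs)) - f θ‖ ^ 2

theorem stmt_2 {n m : ℕ} (f : EuclideanSpace ℝ (Fin n) → EuclideanSpace ℝ (Fin m))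
    (y : EuclideanSpace ℝ (Fin m)) (θs : EuclideanSpace ℝ (Fin n))
    (hf : ContDiff ℝ 2 f) (α : ℝ) (hα : 0 ≤ α) :
    ∀ u v : EuclideanSpace ℝ (Fin n),
      fderiv ℝ (fderiv ℝ (lsEexp f y θs α)) θs u v =
        (1 + α) * (fderiv ℝ (fderiv ℝ (lsE f y)) θs u v) -
          α * ⟪fderiv ℝ f θs u, fderiv ℝ f θs v⟫ := by
  intro u v
  have e1 : lsEexp f y θs α = fun θ => (1/2 : ℝ) * ‖(y + α • (y - f θs)) - f θ‖ ^ 2 := rfl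
  have e2 : lsE f y = fun θ => (1/2 : ℝ) * ‖y - f θ‖ ^ 2 := rfl
  rw [e1, e2, aux_snd f hf _ θs u v, aux_snd f hf y θs u v]
  have h : (y + α • (y - f θs)) - f θs = (1 + α) • (y - f θs) := by
    rw [add_smul, one_smul]; abel
  rw [h, real_inner_smul_left]
  ring
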